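/- arXiv:2603.16644 — 2 statements merged into one kernel-verified Lean document; each statement's English description precedes it below -/
import Mathlib

section
/- Let A ∈ ℝ^{m×n} have rank n, R_s ∈ ℝ^{n×n} be invertible, E ∈ ℝ^{n×n} with ‖E‖·‖R_s⁻¹‖ < 1, and set ε = ‖E‖/‖R_s‖, A_p = A R_s⁻¹, A_1 = A (R_s + E)⁻¹. Then κ(A_1) ≤ κ(A_p) · (1 + ε·κ(R_s)) / (1 − ε·κ(R_s)), where for a full column rank matrix M, κ(M) = ‖M‖·‖M†‖ with M† the Moore–Penrose inverse. -/
open Matrix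

/-- Spectral (operator 2-) norm of a real matrix. -/
noncomputable def spNorm {m n : ℕ} (M : Matrix (Fin m) (Fin n) ℝ) : ℝ :=
  ‖LinearMap.toContinuousLinearMap (Matrix.toEuclideanLin M)‖

/-- Euclidean 2-norm of a real vector. -/
noncomputable def vNorm {n : ℕ} (x : Fin n → ℝ) : ℝ :=
  ‖(WithLp.equiv 2 (Fin n → ℝ)).symm x‖

/-- Moore–Penrose left inverse of a full column rank matrix. -/
noncomputable def pinv {m n : ℕ} (A : Matrix (Fin m) (Fin n) ℝ) : Matrix (Fin n) (Fin m) ℝ :=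
  (Aᵀ * A)⁻¹ * Aᵀ

/-- Condition number with respect to left inversion. -/
noncomputable def kappa {m n : ℕ} (A : Matrix (Fin m) (Fin n) ℝ) : ℝ :=
  spNorm A * spNorm (pinv A)

section Aux
open scoped Matrix.Norms.L2Operator

lemma spNorm_eq {m n : ℕ} (M : Matrix (Fin m) (Fin n) ℝ) : spNorm M = ‖M‖ :=
  (Matrix.l2_opNorm_def M).symm

lemma aux_norm_one_le (n : ℕ) : ‖(1 : Matrix (Fin n) (Fin n) ℝ)‖ ≤ 1 := by
  rw [Matrix.cstar_norm_def, _root_.map_one]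
  exact ContinuousLinearMap.norm_id_le

lemma aux_isUnit_one_add {n : ℕ} (X : Matrix (Fin n) (Fin n) ℝ) (hX : ‖X‖ < 1) :
    IsUnit (1 + X) := by
  have h1 : (1 : Matrix (Fin n) (Fin n) ℝ) - (-X) = 1 + X := sub_neg_eq_add 1 X
  exact h1 ▸ (Units.oneSub (-X) (by simpa using hX)).isUnit

lemma aux_inv_norm_le {n : ℕ} (X : Matrix (Fin n) (Fin n) ℝ) (hX : ‖X‖ < 1) :
    ‖(1 + X)⁻¹‖ * (1 - ‖X‖) ≤ 1 := by
  have hU : IsUnit (1 + X) := aux_isUnit_one_add X hX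
  set B := (1 + X)⁻¹ with hB
  have hmul : (1 + X) * B = 1 :=
    Matrix.mul_nonsing_inv _ ((Matrix.isUnit_iff_isUnit_det _).mp hU)
  have hBe : B = 1 - X * B := by
    have h2 : B + X * B = 1 := by rw [add_mul, one_mul] at hmul; exact hmul
    exact eq_sub_of_add_eq h2
  have h1 : ‖B‖ ≤ 1 + ‖X‖ * ‖B‖ := by
    calc ‖B‖ = ‖1 - X * B‖ := by rw [← hBe]
    _ ≤ ‖(1 : Matrix (Fin n) (Fin n) ℝ)‖ + ‖X * B‖ := norm_sub_le _ _
    _ ≤ 1 + ‖X‖ * ‖B‖ := add_le_add (aux_norm_one_le n) (norm_mul_le _ _)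
  nlinarith [norm_nonneg B]

/-- pinv of `A * M` for invertible `M`. -/
lemma aux_pinv_mul {m n : ℕ} (A : Matrix (Fin m) (Fin n) ℝ) (M : Matrix (Fin n) (Fin n) ℝ)
    (hM : IsUnit M.det) : pinv (A * M) = M⁻¹ * pinv A := by
  have hMT : IsUnit Mᵀ.det := (Matrix.isUnit_det_transpose M hM)
  have : (A * M)ᵀ * (A * M) = Mᵀ * (Aᵀ * A) * M := by
    rw [Matrix.transpose_mul]; simp only [Matrix.mul_assoc]
  rw [pinv, this, Matrix.transpose_mul, Matrix.mul_inv_rev, Matrix.mul_inv_rev, pinv]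
  simp only [Matrix.mul_assoc]
  rw [Matrix.nonsing_inv_mul_cancel_left _ _ hMT]

lemma spNorm_nonneg {m n : ℕ} (M : Matrix (Fin m) (Fin n) ℝ) : 0 ≤ spNorm M := by
  rw [spNorm_eq]; exact norm_nonneg M

lemma spNorm_mul_le {m n l : ℕ} (A : Matrix (Fin m) (Fin n) ℝ) (B : Matrix (Fin n) (Fin l) ℝ) :
    spNorm (A * B) ≤ spNorm A * spNorm B := by
  simp only [spNorm_eq]; exact Matrix.l2_opNorm_mul A B

lemma spNorm_one_add_le {n : ℕ} (X : Matrix (Fin n) (Fin n) ℝ) :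
    spNorm (1 + X) ≤ 1 + spNorm X := by
  simp only [spNorm_eq]
  exact le_trans (norm_add_le _ _) (add_le_add_left (aux_norm_one_le n) _)

lemma spNorm_isUnit_one_add {n : ℕ} (X : Matrix (Fin n) (Fin n) ℝ) (hX : spNorm X < 1) :
    IsUnit (1 + X) := aux_isUnit_one_add X (by rwa [spNorm_eq] at hX)

lemma spNorm_inv_one_add {n : ℕ} (X : Matrix (Fin n) (Fin n) ℝ) (hX : spNorm X < 1) :
    spNorm (1 + X)⁻¹ * (1 - spNorm X) ≤ 1 := by
  simp only [spNorm_eq] at hX ⊢; exact aux_inv_norm_le X hX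

lemma spNorm_eq_zero_iff {m n : ℕ} (M : Matrix (Fin m) (Fin n) ℝ) : spNorm M = 0 ↔ M = 0 := by
  rw [spNorm_eq]; exact norm_eq_zero


end Aux

theorem stmt_2 {m n : ℕ} (A : Matrix (Fin m) (Fin n) ℝ) (Rs E : Matrix (Fin n) (Fin n) ℝ)
    (hA : A.rank = n) (hR : IsUnit Rs.det) (h : spNorm E * spNorm Rs⁻¹ < 1)
    (ε : ℝ) (hε : ε = spNorm E / spNorm Rs) :
    kappa (A * (Rs + E)⁻¹) ≤
      kappa (A * Rs⁻¹) * ((1 + ε * kappa Rs) / (1 - ε * kappa Rs)) := by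
  open scoped Matrix.Norms.L2Operator in
  rcases Nat.eq_zero_or_pos n with hn | hn
  · subst hn
    have h1 : A * (Rs + E)⁻¹ = 0 := Subsingleton.elim _ _
    have h2 : A * Rs⁻¹ = 0 := Subsingleton.elim _ _
    have hz : ∀ (M : Matrix (Fin m) (Fin 0) ℝ), spNorm M = 0 := fun M => by
      rw [spNorm_eq, show M = 0 from Subsingleton.elim _ _, norm_zero]
    rw [kappa, kappa, hz, hz, zero_mul, zero_mul, zero_mul]
  · -- main case
    have hRT : IsUnit Rsᵀ.det := Matrix.isUnit_det_transpose Rs hR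
    set X := E * Rs⁻¹ with hXdef
    set t := spNorm E * spNorm Rs⁻¹ with htdef
    have ht0 : 0 ≤ t := mul_nonneg (spNorm_nonneg _) (spNorm_nonneg _)
    have hXt : spNorm X ≤ t := spNorm_mul_le E Rs⁻¹
    have hX1 : spNorm X < 1 := lt_of_le_of_lt hXt h
    have hU : IsUnit (1 + X) := spNorm_isUnit_one_add _ hX1
    have hUdet : IsUnit (1 + X).det := (Matrix.isUnit_iff_isUnit_det _).mp hU
    have hfact : (1 + X) * Rs = Rs + E := by
      rw [add_mul, one_mul, hXdef, Matrix.nonsing_inv_mul_cancel_right _ _ hR]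
    have hRsE : IsUnit (Rs + E).det := by
      rw [← hfact, Matrix.det_mul]; exact hUdet.mul hR
    -- identity 1
    have hid1 : A * (Rs + E)⁻¹ = (A * Rs⁻¹) * (1 + X)⁻¹ := by
      rw [← hfact, Matrix.mul_inv_rev, ← Matrix.mul_assoc]
    -- identity 2
    have hp1 : pinv (A * (Rs + E)⁻¹) = (Rs + E) * pinv A := by
      rw [aux_pinv_mul A _ (Matrix.isUnit_nonsing_inv_det _ hRsE),
        Matrix.nonsing_inv_nonsing_inv _ hRsE]
    have hp2 : pinv (A * Rs⁻¹) = Rs * pinv A := by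
      rw [aux_pinv_mul A _ (Matrix.isUnit_nonsing_inv_det _ hR),
        Matrix.nonsing_inv_nonsing_inv _ hR]
    have hid2 : pinv (A * (Rs + E)⁻¹) = (1 + X) * pinv (A * Rs⁻¹) := by
      rw [hp1, hp2, ← Matrix.mul_assoc, hfact]
    -- kappa Rs
    have hpinvRs : pinv Rs = Rs⁻¹ := by
      rw [pinv, Matrix.mul_inv_rev, Matrix.mul_assoc, Matrix.nonsing_inv_mul _ hRT, mul_one]
    have hRsne : spNorm Rs ≠ 0 := by
      intro h0
      have : Rs = 0 := (spNorm_eq_zero_iff Rs).mp h0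
      rw [this, (haveI : Nonempty (Fin n) := ⟨⟨0, hn⟩⟩; Matrix.det_zero)] at hR
      exact one_ne_zero ((isUnit_zero_iff.mp hR).symm)
    have hkRs : ε * kappa Rs = t := by
      rw [hε, kappa, hpinvRs, htdef]
      field_simp
    -- norm bounds
    set a := spNorm (A * Rs⁻¹) with hadef
    set p := spNorm (pinv (A * Rs⁻¹)) with hpdef
    set b := spNorm (1 + X)⁻¹ with hbdef
    have ha0 : 0 ≤ a := spNorm_nonneg _
    have hp0 : 0 ≤ p := spNorm_nonneg _
    have hb0 : 0 ≤ b := spNorm_nonneg _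
    have nA1 : spNorm (A * (Rs + E)⁻¹) ≤ a * b := by
      rw [hid1]; exact spNorm_mul_le _ _
    have nP1 : spNorm (pinv (A * (Rs + E)⁻¹)) ≤ (1 + t) * p := by
      rw [hid2]
      refine le_trans (spNorm_mul_le _ _) ?_
      exact mul_le_mul_of_nonneg_right
        (le_trans (spNorm_one_add_le X) (add_le_add_right hXt 1)) hp0
    have nInv : b * (1 - t) ≤ 1 := by
      have h1 := spNorm_inv_one_add X hX1
      nlinarith
    have ht1 : (0:ℝ) < 1 - t := by linarith
    have hL : kappa (A * (Rs + E)⁻¹) ≤ (a * b) * ((1 + t) * p) := by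
      rw [kappa]
      exact mul_le_mul nA1 nP1 (spNorm_nonneg _) (mul_nonneg ha0 hb0)
    have hfinal : a * b * ((1 + t) * p) ≤ (a * p) * ((1 + t) / (1 - t)) := by
      rw [← mul_div_assoc, le_div_iff₀ ht1]
      nlinarith [mul_le_mul_of_nonneg_left nInv
        (mul_nonneg (mul_nonneg ha0 hp0) (by linarith : (0:ℝ) ≤ 1 + t))]
    rw [hkRs]
    calc kappa (A * (Rs + E)⁻¹) ≤ a * b * ((1 + t) * p) := hL
      _ ≤ (a * p) * ((1 + t) / (1 - t)) := hfinal
      _ = kappa (A * Rs⁻¹) * ((1 + t) / (1 - t)) := by rw [kappa]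
end

section
/- Let A ∈ ℝ^{m×n} have rank n, let x* solve AᵀA x* = Aᵀ b, and let E ∈ ℝ^{m×n} with ε = ‖E‖/‖A‖, and suppose x̂ ≠ 0 satisfies (A+E)ᵀ(A+E) x̂ = (A+E)ᵀ b. Then ‖x̂ − x*‖/‖x̂‖ ≤ κ(A)² · ε · ( ‖b − A x̂‖/(‖A‖·‖x̂‖) + 1 + ε ). -/
open Matrix

section aux
open scoped Matrix.Norms.L2Operator

lemma vNorm_mulVec_le {m n : ℕ} (M : Matrix (Fin m) (Fin n) ℝ) (x : Fin n → ℝ) :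
    vNorm (M *ᵥ x) ≤ ‖M‖ * vNorm x :=
  M.l2_opNorm_mulVec ((WithLp.equiv 2 (Fin n → ℝ)).symm x)

lemma spNorm_transpose' {m n : ℕ} (M : Matrix (Fin m) (Fin n) ℝ) : ‖Mᵀ‖ = ‖M‖ := by
  have h : Mᴴ = Mᵀ := by ext i j; simp [conjTranspose_apply]
  rw [← h]; exact M.l2_opNorm_conjTranspose

lemma vNorm_sub_sub_le {n : ℕ} (u v w : Fin n → ℝ) :
    vNorm (u - v - w) ≤ vNorm u + vNorm v + vNorm w := by
  show ‖(WithLp.equiv 2 (Fin n → ℝ)).symm u - (WithLp.equiv 2 (Fin n → ℝ)).symm v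
      - (WithLp.equiv 2 (Fin n → ℝ)).symm w‖ ≤ _
  calc ‖_ - _ - _‖ ≤ ‖(WithLp.equiv 2 (Fin n → ℝ)).symm u - (WithLp.equiv 2 (Fin n → ℝ)).symm v‖
      + ‖(WithLp.equiv 2 (Fin n → ℝ)).symm w‖ := norm_sub_le _ _
    _ ≤ _ := by
      have := norm_sub_le ((WithLp.equiv 2 (Fin n → ℝ)).symm u)
        ((WithLp.equiv 2 (Fin n → ℝ)).symm v)
      unfold vNorm; linarith

lemma vNorm_pos {n : ℕ} {x : Fin n → ℝ} (h : x ≠ 0) : 0 < vNorm x := by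
  have : (WithLp.equiv 2 (Fin n → ℝ)).symm x ≠ 0 := by
    simpa using h
  exact norm_pos_iff.mpr this

lemma isUnit_ata {m n : ℕ} (A : Matrix (Fin m) (Fin n) ℝ) (hA : A.rank = n) :
    IsUnit (Aᵀ * A) := by
  have hr : (Aᵀ * A).rank = n := by rw [A.rank_transpose_mul_self, hA]
  rw [← Matrix.mulVec_surjective_iff_isUnit]
  have ht : LinearMap.range (Aᵀ * A).mulVecLin = ⊤ := by
    apply Submodule.eq_top_of_finrank_eq
    rw [← Matrix.rank, hr]; simp [Module.finrank_pi]
  intro y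
  obtain ⟨x, hx⟩ := ht ▸ Submodule.mem_top (x := y) (R := ℝ)
  exact ⟨x, hx⟩

end aux

set_option maxHeartbeats 2000000 in
open scoped Matrix.Norms.L2Operator in
theorem stmt_5 {m n : ℕ} (A E : Matrix (Fin m) (Fin n) ℝ) (b : Fin m → ℝ)
    (xs xh : Fin n → ℝ) (hA : A.rank = n)
    (ε : ℝ) (hε : ε = spNorm E / spNorm A)
    (hxs : (Aᵀ * A) *ᵥ xs = Aᵀ *ᵥ b)
    (hxh : ((A + E)ᵀ * (A + E)) *ᵥ xh = (A + E)ᵀ *ᵥ b)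
    (hne : xh ≠ 0) :
    vNorm (xh - xs) / vNorm xh ≤
      kappa A ^ 2 * ε * (vNorm (b - A *ᵥ xh) / (spNorm A * vNorm xh) + 1 + ε) := by
  have hU := isUnit_ata A hA
  have hdet : IsUnit (Aᵀ * A).det := (Matrix.isUnit_iff_isUnit_det _).mp hU
  set G : Matrix (Fin n) (Fin n) ℝ := (Aᵀ * A)⁻¹ with hGdef
  have hGA : G * (Aᵀ * A) = 1 := Matrix.nonsing_inv_mul _ hdet
  have hAG : (Aᵀ * A) * G = 1 := Matrix.mul_nonsing_inv _ hdet
  have hGT : Gᵀ = G := by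
    rw [hGdef, Matrix.transpose_nonsing_inv, Matrix.transpose_mul, Matrix.transpose_transpose]
  have hP : pinv A = G * Aᵀ := rfl
  have hPA : pinv A * A = 1 := by rw [hP, Matrix.mul_assoc]; exact hGA
  have hPPT : pinv A * (pinv A)ᵀ = G := by
    rw [hP, Matrix.transpose_mul, Matrix.transpose_transpose, hGT, ← Matrix.mul_assoc,
      Matrix.mul_assoc G Aᵀ A, hGA, Matrix.one_mul]
  -- residual
  set r : Fin m → ℝ := b - A *ᵥ xh with hrdef
  -- expand the perturbed normal equations
  have hxh' : (Aᵀ * A) *ᵥ xh + (Aᵀ * E) *ᵥ xh + (Eᵀ * A) *ᵥ xh + (Eᵀ * E) *ᵥ xh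
      = Aᵀ *ᵥ b + Eᵀ *ᵥ b := by
    have h := hxh
    rw [Matrix.transpose_add, Matrix.add_mul, Matrix.mul_add, Matrix.mul_add,
      Matrix.add_mulVec, Matrix.add_mulVec, Matrix.add_mulVec, Matrix.add_mulVec] at h
    linear_combination h
  have step : (Aᵀ * A) *ᵥ (xh - xs) = Eᵀ *ᵥ r - (Aᵀ * E) *ᵥ xh - (Eᵀ * E) *ᵥ xh := by
    rw [Matrix.mulVec_sub, hxs, hrdef, Matrix.mulVec_sub, Matrix.mulVec_mulVec]
    linear_combination hxh'
  have key : xh - xs = G *ᵥ (Eᵀ *ᵥ r) - pinv A *ᵥ (E *ᵥ xh) - G *ᵥ ((Eᵀ * E) *ᵥ xh) := by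
    have c : xh - xs = G *ᵥ ((Aᵀ * A) *ᵥ (xh - xs)) := by
      rw [Matrix.mulVec_mulVec, hGA, Matrix.one_mulVec]
    rw [c, step, Matrix.mulVec_sub, Matrix.mulVec_sub]
    congr 2
    rw [Matrix.mulVec_mulVec, Matrix.mulVec_mulVec, hP, Matrix.mul_assoc]
  -- norms
  set a := spNorm A with hadef
  set p := spNorm (pinv A) with hpdef
  set e := spNorm E with hedef
  have hp' : ‖pinv A‖ = p := (spNorm_eq _).symm
  have ha' : ‖A‖ = a := (spNorm_eq _).symm
  have he' : ‖E‖ = e := (spNorm_eq _).symm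
  have hGle : ‖G‖ ≤ p * p := by
    rw [← hPPT, hpdef, spNorm_eq]
    calc ‖pinv A * (pinv A)ᵀ‖ ≤ ‖pinv A‖ * ‖(pinv A)ᵀ‖ := Matrix.l2_opNorm_mul _ _
      _ = ‖pinv A‖ * ‖pinv A‖ := by rw [spNorm_transpose']
  have hEE : ‖Eᵀ * E‖ ≤ e * e := by
    have h : Eᴴ = Eᵀ := by ext i j; simp [conjTranspose_apply]
    rw [← h, E.l2_opNorm_conjTranspose_mul_self, hedef, spNorm_eq]
  have hET : ‖Eᵀ‖ = e := by rw [spNorm_transpose', hedef, spNorm_eq]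
  have hh : 0 < vNorm xh := vNorm_pos hne
  set h := vNorm xh with hhdef
  set ρ := vNorm r with hρdef
  have hρ0 : 0 ≤ ρ := norm_nonneg _
  have he0 : 0 ≤ e := norm_nonneg _
  have hp0 : 0 ≤ p := norm_nonneg _
  have ha0 : 0 ≤ a := norm_nonneg _
  -- 1 ≤ a * p and 0 < a
  have hchain : h ≤ p * (a * h) := by
    have hx : xh = pinv A *ᵥ (A *ᵥ xh) := by
      rw [Matrix.mulVec_mulVec, hPA, Matrix.one_mulVec]
    calc h = vNorm (pinv A *ᵥ (A *ᵥ xh)) := by rw [hhdef, ← hx]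
      _ ≤ ‖pinv A‖ * vNorm (A *ᵥ xh) := vNorm_mulVec_le _ _
      _ ≤ ‖pinv A‖ * (‖A‖ * vNorm xh) :=
          mul_le_mul_of_nonneg_left (vNorm_mulVec_le A xh) (norm_nonneg _)
      _ = p * (a * h) := rfl
  have hap : 1 ≤ a * p := by nlinarith
  have ha : 0 < a := by nlinarith
  -- three term bounds
  have t1 : vNorm (G *ᵥ (Eᵀ *ᵥ r)) ≤ p * p * (e * ρ) := by
    have h1 := vNorm_mulVec_le Eᵀ r
    rw [hET] at h1
    calc vNorm (G *ᵥ (Eᵀ *ᵥ r)) ≤ ‖G‖ * vNorm (Eᵀ *ᵥ r) := vNorm_mulVec_le _ _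
      _ ≤ (p * p) * (e * vNorm r) :=
          mul_le_mul hGle h1 (norm_nonneg _) (mul_nonneg hp0 hp0)
      _ = p * p * (e * ρ) := by rw [hρdef]
  have t2 : vNorm (pinv A *ᵥ (E *ᵥ xh)) ≤ p * (e * h) := by
    have h1 := vNorm_mulVec_le E xh
    calc vNorm (pinv A *ᵥ (E *ᵥ xh)) ≤ ‖pinv A‖ * vNorm (E *ᵥ xh) := vNorm_mulVec_le _ _
      _ ≤ ‖pinv A‖ * (‖E‖ * vNorm xh) := mul_le_mul_of_nonneg_left h1 (norm_nonneg _)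
      _ = p * (e * h) := by rw [hp', he', hhdef]
  have t3 : vNorm (G *ᵥ ((Eᵀ * E) *ᵥ xh)) ≤ p * p * (e * e * h) := by
    have h1 := vNorm_mulVec_le (Eᵀ * E) xh
    have h1' : vNorm ((Eᵀ * E) *ᵥ xh) ≤ (e * e) * vNorm xh :=
      h1.trans (mul_le_mul_of_nonneg_right hEE (norm_nonneg _))
    calc vNorm (G *ᵥ ((Eᵀ * E) *ᵥ xh)) ≤ ‖G‖ * vNorm ((Eᵀ * E) *ᵥ xh) := vNorm_mulVec_le _ _
      _ ≤ (p * p) * ((e * e) * vNorm xh) :=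
          mul_le_mul hGle h1' (norm_nonneg _) (mul_nonneg hp0 hp0)
      _ = p * p * (e * e * h) := by rw [hhdef]
  have main : vNorm (xh - xs) ≤ p * p * (e * ρ) + p * (e * h) + p * p * (e * e * h) := by
    rw [key]
    exact le_trans (vNorm_sub_sub_le _ _ _) (by linarith)
  -- final arithmetic
  subst hε
  rw [show kappa A = a * p from rfl]
  have hrhs : (a * p) ^ 2 * (e / a) * (ρ / (a * h) + 1 + e / a)
      = (p * p * (e * ρ) + p * p * (e * a * h) + p * p * (e * e * h)) / h := by
    field_simp
  rw [hrhs, div_le_div_iff_of_pos_right hh]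
  nlinarith [mul_nonneg (mul_nonneg hp0 he0) hh.le]
end
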